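/- arXiv:1611.05600 — 3 statements merged into one kernel-verified Lean document; each statement's English description precedes it below -/
import Mathlib

section
/- The functions e^1_{k,n}(x,y) = √(n!/(n-k)!) B^{(k+1)/2} exp(-B(x²+y²)/2)(x+iy)^k L_n^{(k)}(B(x²+y²)), for fixed n and 0 ≤ k ≤ n, belong to L^2(ℝ^2) and are pairwise orthogonal in L^2(ℝ^2). -/
open MeasureTheory

/-- The Laguerre polynomial `L_n^{(α)}(t) = Σ_{k=0}^n (-1)^k C(n+α, n-k) t^k / k!`. -/
noncomputable def laguerre (n α : ℕ) (t : ℝ) : ℝ :=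
  ∑ k ∈ Finset.range (n + 1),
    (-1 : ℝ) ^ k * ((n + α).choose (n - k) : ℝ) * t ^ k / (Nat.factorial k : ℝ)

/-- The eigenfunction
`e^1_{k,n}(x,y) = √(n!/(n-k)!) B^{(k+1)/2} e^{-B(x²+y²)/2} (x+iy)^k L_n^{(k)}(B(x²+y²))`. -/
noncomputable def e1 (B : ℝ) (n k : ℕ) (p : ℝ × ℝ) : ℂ :=
  ((Real.sqrt ((n.factorial : ℝ) / ((n - k).factorial : ℝ)) *
      B ^ (((k : ℝ) + 1) / 2) : ℝ) : ℂ) *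
    Complex.exp (-(((B * (p.1 ^ 2 + p.2 ^ 2)) : ℝ) : ℂ) / 2) *
    ((p.1 : ℂ) + Complex.I * (p.2 : ℂ)) ^ k *
    ((laguerre n k (B * (p.1 ^ 2 + p.2 ^ 2)) : ℝ) : ℂ)

open Real Set

lemma integrable_pow_mul_gauss {b : ℝ} (hb : 0 < b) (m : ℕ) :
    Integrable fun x : ℝ => x ^ m * Real.exp (-b * x ^ 2) := by
  have h := integrable_rpow_mul_exp_neg_mul_sq hb (s := (m : ℝ))
    (by exact_mod_cast neg_one_lt_zero.trans_le (Nat.cast_nonneg m))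
  simpa [Real.rpow_natCast] using h

lemma integrable_one_add_sq_pow_mul_gauss {b : ℝ} (hb : 0 < b) (N : ℕ) :
    Integrable fun x : ℝ => (1 + x ^ 2) ^ N * Real.exp (-b * x ^ 2) := by
  have h : (fun x : ℝ => (1 + x ^ 2) ^ N * Real.exp (-b * x ^ 2))
      = fun x => ∑ j ∈ Finset.range (N + 1),
          (N.choose j : ℝ) * (x ^ (2 * j) * Real.exp (-b * x ^ 2)) := by
    funext x
    rw [add_comm (1 : ℝ), add_pow, Finset.sum_mul]
    refine Finset.sum_congr rfl fun j hj => ?_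
    rw [pow_mul]; ring
  rw [h]
  exact integrable_finset_sum _ fun j _ => (integrable_pow_mul_gauss hb (2 * j)).const_mul _


lemma continuous_laguerre (n α : ℕ) : Continuous (laguerre n α) := by
  unfold laguerre
  exact continuous_finset_sum _ fun k _ => by fun_prop

lemma continuous_e1 (B : ℝ) (n k : ℕ) : Continuous (e1 B n k) := by
  unfold e1
  apply Continuous.mul
  apply Continuous.mul
  apply Continuous.mul
  · exact continuous_const
  · exact Complex.continuous_exp.comp (by fun_prop)
  · fun_prop
  · exact Complex.continuous_ofReal.comp ((continuous_laguerre n k).comp (by fun_prop))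

lemma laguerre_bound (n α : ℕ) :
    ∃ A : ℝ, 0 ≤ A ∧ ∀ t : ℝ, 0 ≤ t → |laguerre n α t| ≤ A * (1 + t) ^ n := by
  refine ⟨∑ k ∈ Finset.range (n + 1), ((n + α).choose (n - k) : ℝ) / (k.factorial : ℝ),
    Finset.sum_nonneg fun k _ => by positivity, fun t ht => ?_⟩
  rw [laguerre, Finset.sum_mul]
  refine (Finset.abs_sum_le_sum_abs _ _).trans (Finset.sum_le_sum fun k hk => ?_)
  have hk' : k ≤ n := Nat.lt_succ_iff.mp (Finset.mem_range.mp hk)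
  have h1 : |(-1 : ℝ) ^ k * ((n + α).choose (n - k) : ℝ) * t ^ k / (k.factorial : ℝ)|
      = ((n + α).choose (n - k) : ℝ) * t ^ k / (k.factorial : ℝ) := by
    rw [abs_div, abs_mul, abs_mul, abs_pow, abs_neg, abs_one, one_pow, one_mul,
      Nat.abs_cast, abs_of_nonneg (pow_nonneg ht k), Nat.abs_cast]
  have h2 : t ^ k ≤ (1 + t) ^ n :=
    calc t ^ k ≤ (1 + t) ^ k := by gcongr; linarith
      _ ≤ (1 + t) ^ n := by apply pow_le_pow_right₀ (by linarith) hk'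
  rw [h1, div_mul_eq_mul_div]
  gcongr


lemma norm_e1_sq (B : ℝ) (n k : ℕ) (p : ℝ × ℝ) :
    ‖e1 B n k p‖ ^ 2 =
      (Real.sqrt ((n.factorial : ℝ) / ((n - k).factorial : ℝ)) * B ^ (((k : ℝ) + 1) / 2)) ^ 2 *
        Real.exp (-(B * (p.1 ^ 2 + p.2 ^ 2))) * (p.1 ^ 2 + p.2 ^ 2) ^ k *
        laguerre n k (B * (p.1 ^ 2 + p.2 ^ 2)) ^ 2 := by
  have hz : ‖(p.1 : ℂ) + Complex.I * p.2‖ ^ 2 = p.1 ^ 2 + p.2 ^ 2 := by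
    rw [Complex.sq_norm]
    simp [Complex.normSq_apply]; ring
  unfold e1
  rw [norm_mul, norm_mul, norm_mul, norm_pow]
  rw [mul_pow, mul_pow, mul_pow, ← pow_mul, mul_comm k 2, pow_mul, hz]
  congr 1
  congr 1
  congr 1
  · rw [Complex.norm_real, Real.norm_eq_abs, sq_abs]
  · rw [show -((B * (p.1 ^ 2 + p.2 ^ 2) : ℝ) : ℂ) / 2
        = ((-(B * (p.1 ^ 2 + p.2 ^ 2)) / 2 : ℝ) : ℂ) by push_cast; ring,
      Complex.norm_exp_ofReal, ← Real.exp_nat_mul]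
    push_cast
    ring_nf
  · rw [Complex.norm_real, Real.norm_eq_abs, sq_abs]

lemma e1_sq_bound (B : ℝ) (hB : 0 < B) (n k : ℕ) (hk : k ≤ n) :
    ∃ M : ℝ, 0 ≤ M ∧ ∀ p : ℝ × ℝ, ‖e1 B n k p‖ ^ 2 ≤
      M * ((1 + p.1 ^ 2) ^ (3 * n) * Real.exp (-B * p.1 ^ 2) *
        ((1 + p.2 ^ 2) ^ (3 * n) * Real.exp (-B * p.2 ^ 2))) := by
  obtain ⟨A, hA0, hA⟩ := laguerre_bound n k
  set c : ℝ := Real.sqrt ((n.factorial : ℝ) / ((n - k).factorial : ℝ)) * B ^ (((k : ℝ) + 1) / 2)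
    with hc
  refine ⟨c ^ 2 * (A ^ 2 * (1 + B) ^ (2 * n)), by positivity, fun p => ?_⟩
  set x := p.1
  set y := p.2
  set r2 : ℝ := x ^ 2 + y ^ 2 with hr2def
  have hr2 : (0 : ℝ) ≤ r2 := by positivity
  have hs : (0 : ℝ) ≤ B * r2 := by positivity
  have h1 : r2 ^ k ≤ (1 + r2) ^ n :=
    calc r2 ^ k ≤ (1 + r2) ^ k := by gcongr; linarith
      _ ≤ (1 + r2) ^ n := by apply pow_le_pow_right₀ (by linarith) hk
  have h3 : (1 + B * r2) ≤ (1 + B) * (1 + r2) := by nlinarith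
  have h2 : laguerre n k (B * r2) ^ 2 ≤ A ^ 2 * ((1 + B) * (1 + r2)) ^ (2 * n) := by
    calc laguerre n k (B * r2) ^ 2 = |laguerre n k (B * r2)| ^ 2 := (sq_abs _).symm
      _ ≤ (A * (1 + B * r2) ^ n) ^ 2 := by
          apply pow_le_pow_left₀ (abs_nonneg _) (hA _ hs)
      _ = A ^ 2 * ((1 + B * r2) ^ n) ^ 2 := by ring
      _ ≤ A ^ 2 * (((1 + B) * (1 + r2)) ^ n) ^ 2 := by
          gcongr
          all_goals linarith
      _ = A ^ 2 * ((1 + B) * (1 + r2)) ^ (2 * n) := by rw [← pow_mul, mul_comm n 2]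
  have h5 : Real.exp (-(B * r2)) = Real.exp (-B * x ^ 2) * Real.exp (-B * y ^ 2) := by
    rw [← Real.exp_add, hr2def]; ring_nf
  rw [norm_e1_sq]
  calc c ^ 2 * Real.exp (-(B * r2)) * r2 ^ k * laguerre n k (B * r2) ^ 2
      ≤ c ^ 2 * Real.exp (-(B * r2)) * (1 + r2) ^ n *
        (A ^ 2 * ((1 + B) * (1 + r2)) ^ (2 * n)) := by
        have he : (0:ℝ) ≤ Real.exp (-(B * r2)) := (Real.exp_pos _).le
        gcongr
        all_goals first | positivity | exact h1 | exact h2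
    _ = (c ^ 2 * (A ^ 2 * (1 + B) ^ (2 * n))) * ((1 + r2) ^ (3 * n) * Real.exp (-(B * r2))) := by
        rw [mul_pow (1 + B) (1 + r2), show 3 * n = n + 2 * n from by ring, pow_add]
        ring
    _ ≤ (c ^ 2 * (A ^ 2 * (1 + B) ^ (2 * n))) *
        (((1 + x ^ 2) * (1 + y ^ 2)) ^ (3 * n) * Real.exp (-(B * r2))) := by
        gcongr
        all_goals first | positivity | nlinarith [sq_nonneg x, sq_nonneg y]
    _ = (c ^ 2 * (A ^ 2 * (1 + B) ^ (2 * n))) * ((1 + x ^ 2) ^ (3 * n) * Real.exp (-B * x ^ 2) *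
        ((1 + y ^ 2) ^ (3 * n) * Real.exp (-B * y ^ 2))) := by
        rw [mul_pow (1 + x ^ 2) (1 + y ^ 2), h5]; ring

lemma e1_memL2 (B : ℝ) (hB : 0 < B) (n k : ℕ) (hk : k ≤ n) : MemLp (e1 B n k) 2 volume := by
  have hmeas := (continuous_e1 B n k).aestronglyMeasurable (μ := volume)
  rw [memLp_two_iff_integrable_sq_norm hmeas]
  obtain ⟨M, hM0, hM⟩ := e1_sq_bound B hB n k hk
  have hint : Integrable (fun p : ℝ × ℝ =>
      M * ((1 + p.1 ^ 2) ^ (3 * n) * Real.exp (-B * p.1 ^ 2) *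
        ((1 + p.2 ^ 2) ^ (3 * n) * Real.exp (-B * p.2 ^ 2)))) volume := by
    rw [Measure.volume_eq_prod]
    exact ((integrable_one_add_sq_pow_mul_gauss hB (3 * n)).mul_prod
      (integrable_one_add_sq_pow_mul_gauss hB (3 * n))).const_mul M
  apply hint.mono' (((continuous_e1 B n k).norm.pow 2).aestronglyMeasurable)
  filter_upwards with p
  rw [Real.norm_eq_abs, abs_of_nonneg (a := ((fun x => ‖e1 B n k x‖) ^ 2) p) (by exact sq_nonneg ‖e1 B n k p‖)]
  exact hM p

lemma e1_polar (B : ℝ) (n k : ℕ) (r θ : ℝ) :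
    e1 B n k (polarCoord.symm (r, θ)) =
      ((Real.sqrt ((n.factorial : ℝ) / ((n - k).factorial : ℝ)) *
          B ^ (((k : ℝ) + 1) / 2) : ℝ) : ℂ) *
        Complex.exp (((-(B * r ^ 2) / 2 : ℝ)) : ℂ) *
        ((laguerre n k (B * r ^ 2) : ℝ) : ℂ) *
        ((r : ℂ) ^ k * Complex.exp ((θ : ℂ) * Complex.I) ^ k) := by
  have h1 : (r * Real.cos θ) ^ 2 + (r * Real.sin θ) ^ 2 = r ^ 2 := by
    have := Real.sin_sq_add_cos_sq θ; nlinarith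
  have h2 : ((r * Real.cos θ : ℝ) : ℂ) + Complex.I * ((r * Real.sin θ : ℝ) : ℂ)
      = (r : ℂ) * Complex.exp ((θ : ℂ) * Complex.I) := by
    rw [Complex.exp_mul_I, ← Complex.ofReal_cos, ← Complex.ofReal_sin]
    push_cast; ring
  rw [polarCoord_symm_apply]
  unfold e1
  dsimp only
  rw [h1, h2, mul_pow]
  rw [show -((B * r ^ 2 : ℝ) : ℂ) / 2 = (((-(B * r ^ 2) / 2 : ℝ)) : ℂ) by push_cast; ring]
  ring

lemma e1_orth (B : ℝ) (n k k' : ℕ) (hne : k ≠ k') :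
    ∫ p : ℝ × ℝ, e1 B n k p * (starRingEnd ℂ) (e1 B n k' p) = 0 := by
  set c : ℂ := ((k : ℂ) - (k' : ℂ)) * Complex.I with hc
  have hcne : c ≠ 0 := by
    apply mul_ne_zero _ Complex.I_ne_zero
    rw [sub_ne_zero]
    exact_mod_cast fun h => hne (Nat.cast_injective h)
  set F : ℝ → ℂ := fun r =>
    (r : ℂ) * (((Real.sqrt ((n.factorial : ℝ) / ((n - k).factorial : ℝ)) *
        B ^ (((k : ℝ) + 1) / 2) : ℝ) : ℂ) *
      ((Real.sqrt ((n.factorial : ℝ) / ((n - k').factorial : ℝ)) *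
        B ^ (((k' : ℝ) + 1) / 2) : ℝ) : ℂ) *
      Complex.exp (((-(B * r ^ 2) / 2 : ℝ)) : ℂ) ^ 2 *
      ((laguerre n k (B * r ^ 2) : ℝ) : ℂ) * ((laguerre n k' (B * r ^ 2) : ℝ) : ℂ) *
      (r : ℂ) ^ (k + k')) with hF
  set G : ℝ → ℂ := fun θ => Complex.exp (c * (θ : ℂ)) with hG
  have key : ∀ p : ℝ × ℝ,
      p.1 • (e1 B n k (polarCoord.symm p) * (starRingEnd ℂ) (e1 B n k' (polarCoord.symm p)))
        = F p.1 * G p.2 := by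
    rintro ⟨r, θ⟩
    have hconj : (starRingEnd ℂ) (e1 B n k' (polarCoord.symm (r, θ)))
        = ((Real.sqrt ((n.factorial : ℝ) / ((n - k').factorial : ℝ)) *
            B ^ (((k' : ℝ) + 1) / 2) : ℝ) : ℂ) *
          Complex.exp (((-(B * r ^ 2) / 2 : ℝ)) : ℂ) *
          ((laguerre n k' (B * r ^ 2) : ℝ) : ℂ) *
          ((r : ℂ) ^ k' * Complex.exp ((θ : ℂ) * -Complex.I) ^ k') := by
      rw [e1_polar]
      simp only [map_mul, map_pow, Complex.conj_ofReal, ← Complex.exp_conj, map_mul,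
        Complex.conj_I, Complex.conj_ofReal]
    have hexp : Complex.exp ((θ : ℂ) * Complex.I) ^ k *
        Complex.exp ((θ : ℂ) * -Complex.I) ^ k' = G θ := by
      rw [hG, ← Complex.exp_nat_mul, ← Complex.exp_nat_mul, ← Complex.exp_add]
      congr 1
      rw [hc]; ring
    rw [e1_polar, hconj, Complex.real_smul, hF, ← hexp]
    dsimp only
    rw [pow_add]
    ring
  rw [← integral_comp_polarCoord_symm (fun p => e1 B n k p * (starRingEnd ℂ) (e1 B n k' p))]
  rw [show (fun p : ℝ × ℝ =>
        p.1 • (e1 B n k (polarCoord.symm p) * (starRingEnd ℂ) (e1 B n k' (polarCoord.symm p))))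
      = fun p : ℝ × ℝ => F p.1 * G p.2 from funext key]
  rw [polarCoord_target, Measure.volume_eq_prod, ← Measure.prod_restrict, integral_prod_mul]
  apply mul_eq_zero_of_right
  have hle : -π ≤ π := by linarith [Real.pi_pos]
  rw [← integral_Ioc_eq_integral_Ioo, ← intervalIntegral.integral_of_le hle, hG]
  rw [integral_exp_mul_complex hcne]
  have hinv : ∀ j : ℕ, ((-1 : ℂ) ^ j)⁻¹ = (-1 : ℂ) ^ j := fun j => by
    rw [← inv_pow, inv_neg, inv_one]
  have h₁ : Complex.exp (c * (π : ℂ)) = (-1 : ℂ) ^ k * ((-1 : ℂ) ^ k')⁻¹ := by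
    rw [show c * (π : ℂ) = (k : ℂ) * ((π : ℂ) * Complex.I) +
        -((k' : ℂ) * ((π : ℂ) * Complex.I)) from by rw [hc]; ring,
      Complex.exp_add, Complex.exp_neg, Complex.exp_nat_mul, Complex.exp_nat_mul,
      Complex.exp_pi_mul_I]
  have h₂ : Complex.exp (c * ((-π : ℝ) : ℂ)) = (-1 : ℂ) ^ k' * ((-1 : ℂ) ^ k)⁻¹ := by
    rw [show c * ((-π : ℝ) : ℂ) = (k' : ℂ) * ((π : ℂ) * Complex.I) +
        -((k : ℂ) * ((π : ℂ) * Complex.I)) from by rw [hc]; push_cast; ring,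
      Complex.exp_add, Complex.exp_neg, Complex.exp_nat_mul, Complex.exp_nat_mul,
      Complex.exp_pi_mul_I]
  rw [h₁, h₂, hinv, hinv, mul_comm, sub_self, zero_div]

/-- For fixed `n` and `0 ≤ k ≤ n`, the functions `e^1_{k,n}` belong to `L²(ℝ²)` and are
pairwise orthogonal there. -/
theorem e1_memL2_orthogonal (B : ℝ) (hB : 0 < B) (n : ℕ) :
    (∀ k ≤ n, MemLp (e1 B n k) 2 volume) ∧
    (∀ k ≤ n, ∀ k' ≤ n, k ≠ k' →
      ∫ p : ℝ × ℝ, e1 B n k p * (starRingEnd ℂ) (e1 B n k' p) = 0) := by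
  exact ⟨fun k hk => e1_memL2 B hB n k hk, fun k hk k' hk' hne => e1_orth B n k k' hne⟩
end

section
/- Consider the inhomogeneous scalar ODE v'' + a(t)(q(t) + ν²)v = g(t) on [0,T], with a, q Lipschitz, a(t) ≥ a₀ > 0, q(t) ≥ 0, ν ≥ ν₀ > 0, and g continuous. Then there exists C > 0 independent of ν and g such that ν²|v(t)|² + |v'(t)|² ≤ C(ν²|v(0)|² + |v'(0)|² + sup_{0≤s≤T}|g(s)|²) for all t ∈ [0,T]. -/
open Set Filter Topology

/-- Gronwall-type estimate for `E = φ*w + ψ` where `φ` is only Lipschitz. -/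
lemma aux_gronwall_energy {T : ℝ} {φ w w' ψ ψ' : ℝ → ℝ} {L K ε : ℝ}
    (hL : 0 ≤ L)
    (hφ : ∀ x ∈ Icc (0:ℝ) T, ∀ z ∈ Icc (0:ℝ) T, |φ z - φ x| ≤ L * |z - x|)
    (hw : ∀ t ∈ Icc (0:ℝ) T, HasDerivAt w (w' t) t)
    (hψ : ∀ t ∈ Icc (0:ℝ) T, HasDerivAt ψ (ψ' t) t)
    (hwpos : ∀ t ∈ Icc (0:ℝ) T, 0 ≤ w t)
    (hbound : ∀ t ∈ Icc (0:ℝ) T, φ t * w' t + L * w t + ψ' t ≤ K * (φ t * w t + ψ t) + ε) :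
    ∀ t ∈ Icc (0:ℝ) T, φ t * w t + ψ t ≤ gronwallBound (φ 0 * w 0 + ψ 0) K ε t := by
  rcases le_or_gt T 0 with hT | hT
  · intro t ht
    have h0 : t = 0 := le_antisymm (ht.2.trans hT) ht.1
    subst h0
    simp [gronwallBound_x0]
  have hcφ : ContinuousOn φ (Icc 0 T) := by
    intro x hx
    rw [Metric.continuousWithinAt_iff]
    intro e he
    rcases eq_or_lt_of_le hL with hL0 | hL0
    · exact ⟨1, one_pos, fun {z} hz _ => by
        have := hφ x hx z hz
        rw [← hL0, zero_mul] at this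
        simpa [Real.dist_eq] using lt_of_le_of_lt this he⟩
    · refine ⟨e / L, div_pos he hL0, fun {z} hz hd => ?_⟩
      have h1 := hφ x hx z hz
      have : |φ z - φ x| < L * (e / L) := by
        refine h1.trans_lt ?_
        exact mul_lt_mul_of_pos_left (by simpa [Real.dist_eq] using hd) hL0
      rw [mul_div_cancel₀ _ (ne_of_gt hL0)] at this
      simpa [Real.dist_eq] using this
  have hcw : ContinuousOn w (Icc 0 T) :=
    fun t ht => ((hw t ht).continuousAt).continuousWithinAt
  have hcψ : ContinuousOn ψ (Icc 0 T) :=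
    fun t ht => ((hψ t ht).continuousAt).continuousWithinAt
  have key := le_gronwallBound_of_liminf_deriv_right_le
    (f := fun t => φ t * w t + ψ t)
    (f' := fun t => φ t * w' t + L * w t + ψ' t)
    (δ := φ 0 * w 0 + ψ 0) (K := K) (ε := ε) (a := 0) (b := T)
    ((hcφ.mul hcw).add hcψ) ?_ le_rfl (fun x hx => hbound x (Ico_subset_Icc_self hx))
  · intro t ht
    simpa using key t ht
  intro x hx r hr
  have hxI : x ∈ Icc (0:ℝ) T := Ico_subset_Icc_self hx
  have hss : Ioi x \ {x} = Ioi x := by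
    ext z; simp +contextual [mem_diff, ne_of_gt, lt_iff_le_and_ne]
  -- the "smooth part" of the difference quotient tends to φ x * w' x + ψ' x
  have hwslope : Tendsto (fun z => (z - x)⁻¹ * (w z - w x)) (𝓝[>] x) (𝓝 (w' x)) := by
    have := ((hw x hxI).hasDerivWithinAt (s := Ioi x))
    rw [hasDerivWithinAt_iff_tendsto_slope, hss] at this
    simpa [slope_fun_def_field, div_eq_inv_mul] using this
  have hψslope : Tendsto (fun z => (z - x)⁻¹ * (ψ z - ψ x)) (𝓝[>] x) (𝓝 (ψ' x)) := by
    have := ((hψ x hxI).hasDerivWithinAt (s := Ioi x))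
    rw [hasDerivWithinAt_iff_tendsto_slope, hss] at this
    simpa [slope_fun_def_field, div_eq_inv_mul] using this
  have hφt : Tendsto φ (𝓝[>] x) (𝓝 (φ x)) := by
    have h1 : Tendsto φ (𝓝[Icc 0 T] x) (𝓝 (φ x)) := hcφ x hxI
    have h2 : 𝓝[Ioc x T] x = 𝓝[>] x := nhdsWithin_Ioc_eq_nhdsGT hx.2
    rw [← h2]
    exact h1.mono_left (nhdsWithin_mono x (fun z hz => ⟨hx.1.trans hz.1.le, hz.2⟩))
  have hlim : Tendsto (fun z => φ z * ((z - x)⁻¹ * (w z - w x)) + (z - x)⁻¹ * (ψ z - ψ x))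
      (𝓝[>] x) (𝓝 (φ x * w' x + ψ' x)) := (hφt.mul hwslope).add hψslope
  have hlt : φ x * w' x + ψ' x < r - L * w x := by
    linarith
  have hev := hlim.eventually_lt_const hlt
  have hmem : Ioc x T ∈ 𝓝[>] x := Ioc_mem_nhdsGT_of_mem ⟨le_refl x, hx.2⟩
  apply Eventually.frequently
  filter_upwards [hev, hmem] with z huz hzI
  have hzx : 0 < z - x := sub_pos.2 hzI.1
  have hzIcc : z ∈ Icc (0:ℝ) T := ⟨hx.1.trans hzI.1.le, hzI.2⟩
  have habs := hφ x hxI z hzIcc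
  rw [abs_of_pos hzx] at habs
  have h2 : φ z - φ x ≤ L * (z - x) := (le_abs_self _).trans habs
  have hwx := hwpos x hxI
  have keyeq : (z - x)⁻¹ * ((φ z * w z + ψ z) - (φ x * w x + ψ x)) =
      φ z * ((z - x)⁻¹ * (w z - w x)) + (z - x)⁻¹ * ((φ z - φ x) * w x)
        + (z - x)⁻¹ * (ψ z - ψ x) := by
    field_simp
    ring
  have hmid : (z - x)⁻¹ * ((φ z - φ x) * w x) ≤ L * w x := by
    have h3 : (φ z - φ x) * w x ≤ L * (z - x) * w x := mul_le_mul_of_nonneg_right h2 hwx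
    have h4 : (z - x)⁻¹ * ((φ z - φ x) * w x) ≤ (z - x)⁻¹ * (L * (z - x) * w x) :=
      mul_le_mul_of_nonneg_left h3 (inv_nonneg.2 hzx.le)
    refine h4.trans (le_of_eq ?_)
    field_simp
  show (z - x)⁻¹ * ((φ z * w z + ψ z) - (φ x * w x + ψ x)) < r
  rw [keyeq]
  linarith

set_option maxHeartbeats 2000000 in
/-- Energy estimate for the inhomogeneous equation `v'' + a(t)(q(t) + ν²)v = g(t)` on `[0,T]`
with Lipschitz `a, q`, `a ≥ a₀ > 0`, `q ≥ 0`, `ν ≥ ν₀ > 0`, `g` continuous: there is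
`C > 0` independent of `ν` and `g` with
`ν²|v(t)|² + |v'(t)|² ≤ C(ν²|v(0)|² + |v'(0)|² + sup_{0≤s≤T}|g(s)|²)` on `[0,T]`. -/
theorem energy_estimate_inhomogeneous
    (T a₀ ν₀ : ℝ) (hT : 0 < T) (ha₀ : 0 < a₀) (hν₀ : 0 < ν₀)
    (a q : ℝ → ℝ) (Ma Mq : NNReal)
    (ha : LipschitzOnWith Ma a (Icc 0 T)) (hq : LipschitzOnWith Mq q (Icc 0 T))
    (haa : ∀ t ∈ Icc (0:ℝ) T, a₀ ≤ a t) (hqq : ∀ t ∈ Icc (0:ℝ) T, 0 ≤ q t) :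
    ∃ C > 0, ∀ ν : ℝ, ν₀ ≤ ν → ∀ g : ℝ → ℂ, ContinuousOn g (Icc 0 T) →
      ∀ v v' : ℝ → ℂ,
      (∀ t ∈ Icc (0:ℝ) T, HasDerivAt v (v' t) t) →
      (∀ t ∈ Icc (0:ℝ) T,
        HasDerivAt v' (g t - (((a t * (q t + ν ^ 2)) : ℝ) : ℂ) * v t) t) →
      ∀ t ∈ Icc (0:ℝ) T,
        ν ^ 2 * ‖v t‖ ^ 2 + ‖v' t‖ ^ 2 ≤
          C * (ν ^ 2 * ‖v 0‖ ^ 2 + ‖v' 0‖ ^ 2 + ⨆ s : Icc (0:ℝ) T, ‖g (s : ℝ)‖ ^ 2) := by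
  have ht0 : (0:ℝ) ∈ Icc (0:ℝ) T := ⟨le_rfl, hT.le⟩
  set Abd : ℝ := |a 0| + (Ma:ℝ) * T with hAbd_def
  set Qbd : ℝ := |q 0| + (Mq:ℝ) * T with hQbd_def
  have hAbd : 0 ≤ Abd := add_nonneg (abs_nonneg _) (mul_nonneg Ma.coe_nonneg hT.le)
  have hQbd : 0 ≤ Qbd := add_nonneg (abs_nonneg _) (mul_nonneg Mq.coe_nonneg hT.le)
  have hν₀2 : 0 < ν₀ ^ 2 := pow_pos hν₀ 2
  set K₂ : ℝ := (Ma:ℝ) * (Qbd / ν₀ ^ 2 + 1) + Abd * (Mq:ℝ) / ν₀ ^ 2 with hK₂_def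
  have hK₂ : 0 ≤ K₂ :=
    add_nonneg (mul_nonneg Ma.coe_nonneg (add_nonneg (div_nonneg hQbd hν₀2.le) zero_le_one))
      (div_nonneg (mul_nonneg hAbd Mq.coe_nonneg) hν₀2.le)
  set K : ℝ := K₂ / a₀ + 1 with hK_def
  have hK1 : 1 ≤ K := le_add_of_nonneg_left (div_nonneg hK₂ ha₀.le)
  have hKpos : 0 < K := lt_of_lt_of_le one_pos hK1
  set K0 : ℝ := Abd * (Qbd / ν₀ ^ 2 + 1) + 1 with hK0_def
  have hK0 : 0 ≤ K0 :=
    add_nonneg (mul_nonneg hAbd (add_nonneg (div_nonneg hQbd hν₀2.le) zero_le_one)) zero_le_one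
  have hP1 : 0 < 1 / a₀ + 1 := add_pos (one_div_pos.2 ha₀) one_pos
  refine ⟨(1 / a₀ + 1) * Real.exp (K * T) * (K0 + 1), by positivity, ?_⟩
  intro ν hν g hg v v' hv hv'
  -- bounds for a and q on the interval
  have haB : ∀ t ∈ Icc (0:ℝ) T, a t ≤ Abd := by
    intro t ht
    have h3 : |a t - a 0| ≤ (Ma:ℝ) * |t - 0| := by
      have := ha.dist_le_mul t ht 0 ht0
      simpa [Real.dist_eq] using this
    have h4 : |t - 0| ≤ T := by rw [sub_zero, abs_of_nonneg ht.1]; exact ht.2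
    have h5 := mul_le_mul_of_nonneg_left h4 Ma.coe_nonneg
    have h1 : a t - a 0 ≤ |a t - a 0| := le_abs_self _
    have h2 : a 0 ≤ |a 0| := le_abs_self _
    simp only [hAbd_def]; linarith
  have hqB : ∀ t ∈ Icc (0:ℝ) T, q t ≤ Qbd := by
    intro t ht
    have h3 : |q t - q 0| ≤ (Mq:ℝ) * |t - 0| := by
      have := hq.dist_le_mul t ht 0 ht0
      simpa [Real.dist_eq] using this
    have h4 : |t - 0| ≤ T := by rw [sub_zero, abs_of_nonneg ht.1]; exact ht.2
    have h5 := mul_le_mul_of_nonneg_left h4 Mq.coe_nonneg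
    have h1 : q t - q 0 ≤ |q t - q 0| := le_abs_self _
    have h2 : q 0 ≤ |q 0| := le_abs_self _
    simp only [hQbd_def]; linarith
  have hνν : ν₀ ^ 2 ≤ ν ^ 2 := by nlinarith
  have hν2 : 0 < ν ^ 2 := lt_of_lt_of_le hν₀2 hνν
  -- the sup of ‖g‖²
  set G : ℝ := ⨆ s : Icc (0:ℝ) T, ‖g (s : ℝ)‖ ^ 2 with hG_def
  have hbdd : BddAbove (Set.range fun s : Icc (0:ℝ) T => ‖g (s:ℝ)‖ ^ 2) := by
    have hc : ContinuousOn (fun t => ‖g t‖ ^ 2) (Icc (0:ℝ) T) := (hg.norm).pow 2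
    have h2 := (isCompact_Icc.image_of_continuousOn hc).bddAbove
    rwa [Set.image_eq_range] at h2
  have hGb : ∀ s ∈ Icc (0:ℝ) T, ‖g s‖ ^ 2 ≤ G := fun s hs => le_ciSup hbdd ⟨s, hs⟩
  have hG0 : 0 ≤ G := le_trans (by positivity) (hGb 0 ht0)
  -- data for the auxiliary lemma
  set φ : ℝ → ℝ := fun t => a t * (q t + ν ^ 2) with hφ_def
  set L : ℝ := (Ma:ℝ) * (Qbd + ν ^ 2) + Abd * (Mq:ℝ) with hL_def
  have hL : 0 ≤ L :=
    add_nonneg (mul_nonneg Ma.coe_nonneg (by positivity)) (mul_nonneg hAbd Mq.coe_nonneg)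
  have hφlip : ∀ x ∈ Icc (0:ℝ) T, ∀ z ∈ Icc (0:ℝ) T, |φ z - φ x| ≤ L * |z - x| := by
    intro x hx z hz
    have h1 : |a z - a x| ≤ (Ma:ℝ) * |z - x| := by
      have := ha.dist_le_mul z hz x hx; simpa [Real.dist_eq] using this
    have h2 : |q z - q x| ≤ (Mq:ℝ) * |z - x| := by
      have := hq.dist_le_mul z hz x hx; simpa [Real.dist_eq] using this
    have heq : φ z - φ x = (a z - a x) * (q z + ν ^ 2) + a x * (q z - q x) := by
      simp only [hφ_def]; ring
    calc |φ z - φ x| ≤ |(a z - a x) * (q z + ν ^ 2)| + |a x * (q z - q x)| := by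
          rw [heq]; exact abs_add_le _ _
      _ = |a z - a x| * (q z + ν ^ 2) + a x * |q z - q x| := by
          rw [abs_mul, abs_mul, abs_of_nonneg (by nlinarith [hqq z hz] : (0:ℝ) ≤ q z + ν ^ 2),
            abs_of_nonneg (le_trans ha₀.le (haa x hx))]
      _ ≤ ((Ma:ℝ) * |z - x|) * (Qbd + ν ^ 2) + Abd * ((Mq:ℝ) * |z - x|) :=
          add_le_add
            (mul_le_mul h1 (add_le_add_left (hqB z hz) _) (add_nonneg (hqq z hz) (sq_nonneg ν))
              (mul_nonneg Ma.coe_nonneg (abs_nonneg _)))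
            (mul_le_mul (haB x hx) h2 (abs_nonneg _) hAbd)
      _ = L * |z - x| := by rw [hL_def]; ring
  -- derivatives of w = ‖v‖² and ψ = ‖v'‖²
  set w : ℝ → ℝ := fun t => ‖v t‖ ^ 2 with hw_def
  set ψ : ℝ → ℝ := fun t => ‖v' t‖ ^ 2 with hψ_def
  set w' : ℝ → ℝ := fun t => 2 * ((v t).re * (v' t).re + (v t).im * (v' t).im) with hw'_def
  set dv : ℝ → ℂ := fun t => g t - (((a t * (q t + ν ^ 2)) : ℝ) : ℂ) * v t with hdv_def
  set ψ' : ℝ → ℝ := fun t => 2 * ((v' t).re * (dv t).re + (v' t).im * (dv t).im) with hψ'_def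
  have hnormsq : ∀ u : ℝ → ℂ, (fun s => ‖u s‖ ^ 2) = fun s => (u s).re * (u s).re + (u s).im * (u s).im := by
    intro u; funext s
    rw [Complex.sq_norm, Complex.normSq_apply]
  have hre : ∀ (u u' : ℝ → ℂ) (t : ℝ), HasDerivAt u (u' t) t →
      HasDerivAt (fun s => (u s).re) ((u' t).re) t := by
    intro u u' t hu
    exact (Complex.reCLM.hasFDerivAt.comp_hasDerivAt t hu)
  have him : ∀ (u u' : ℝ → ℂ) (t : ℝ), HasDerivAt u (u' t) t →
      HasDerivAt (fun s => (u s).im) ((u' t).im) t := by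
    intro u u' t hu
    exact (Complex.imCLM.hasFDerivAt.comp_hasDerivAt t hu)
  have hwderiv : ∀ t ∈ Icc (0:ℝ) T, HasDerivAt w (w' t) t := by
    intro t ht
    have h1 := hre v v' t (hv t ht)
    have h2 := him v v' t (hv t ht)
    have h3 := (h1.mul h1).add (h2.mul h2)
    rw [hw_def, hnormsq v]
    refine h3.congr_deriv ?_
    simp only [hw'_def]; ring
  have hψderiv : ∀ t ∈ Icc (0:ℝ) T, HasDerivAt ψ (ψ' t) t := by
    intro t ht
    have h1 := hre v' dv t (hv' t ht)
    have h2 := him v' dv t (hv' t ht)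
    have h3 := (h1.mul h1).add (h2.mul h2)
    rw [hψ_def, hnormsq v']
    refine h3.congr_deriv ?_
    simp only [hψ'_def]; ring
  have hwpos : ∀ t ∈ Icc (0:ℝ) T, 0 ≤ w t := fun t _ => by positivity
  have hψpos : ∀ t ∈ Icc (0:ℝ) T, 0 ≤ ψ t := fun t _ => by positivity
  have hφpos : ∀ t ∈ Icc (0:ℝ) T, a₀ * ν ^ 2 ≤ φ t := by
    intro t ht
    have := haa t ht; have := hqq t ht
    simp only [hφ_def]
    nlinarith
  have hφnn : ∀ t ∈ Icc (0:ℝ) T, 0 ≤ φ t := fun t ht =>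
    le_trans (by positivity) (hφpos t ht)
  -- key differential inequality
  have hbound : ∀ t ∈ Icc (0:ℝ) T,
      φ t * w' t + L * w t + ψ' t ≤ K * (φ t * w t + ψ t) + G := by
    intro t ht
    have hcancel : φ t * w' t + ψ' t = 2 * ((v' t).re * (g t).re + (v' t).im * (g t).im) := by
      simp only [hφ_def, hw'_def, hψ'_def, hdv_def, Complex.sub_re, Complex.sub_im,
        Complex.mul_re, Complex.mul_im, Complex.ofReal_re, Complex.ofReal_im]
      ring
    have h2ab : 2 * ((v' t).re * (g t).re + (v' t).im * (g t).im) ≤ ψ t + ‖g t‖ ^ 2 := by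
      have hψeq : ψ t = (v' t).re * (v' t).re + (v' t).im * (v' t).im :=
        congrFun (hnormsq v') t
      have hgeq : ‖g t‖ ^ 2 = (g t).re * (g t).re + (g t).im * (g t).im :=
        congrFun (hnormsq g) t
      rw [hψeq, hgeq]
      nlinarith [sq_nonneg ((v' t).re - (g t).re), sq_nonneg ((v' t).im - (g t).im)]
    have hgG : ‖g t‖ ^ 2 ≤ G := hGb t ht
    -- L * w t ≤ (K₂ / a₀) * (φ t * w t)
    have hLK : L ≤ K₂ * ν ^ 2 := by
      have hd : Qbd / ν₀ ^ 2 * ν₀ ^ 2 = Qbd := div_mul_cancel₀ _ hν₀2.ne'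
      have hd2 : Abd * (Mq:ℝ) / ν₀ ^ 2 * ν₀ ^ 2 = Abd * (Mq:ℝ) := div_mul_cancel₀ _ hν₀2.ne'
      simp only [hL_def, hK₂_def]
      nlinarith [div_nonneg hQbd hν₀2.le, div_nonneg (mul_nonneg hAbd Mq.coe_nonneg) hν₀2.le,
        Ma.coe_nonneg, mul_nonneg (div_nonneg hQbd hν₀2.le) (sub_nonneg.2 hνν),
        mul_nonneg (div_nonneg (mul_nonneg hAbd Mq.coe_nonneg) hν₀2.le) (sub_nonneg.2 hνν)]
    have hLw : L * w t ≤ K₂ / a₀ * (φ t * w t) := by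
      have s1 : L * w t ≤ K₂ * ν ^ 2 * w t :=
        mul_le_mul_of_nonneg_right hLK (hwpos t ht)
      have s2 : K₂ * (a₀ * ν ^ 2 * w t) ≤ K₂ * (φ t * w t) :=
        mul_le_mul_of_nonneg_left
          (mul_le_mul_of_nonneg_right (hφpos t ht) (hwpos t ht)) hK₂
      have s3 : K₂ / a₀ * (φ t * w t) = K₂ * (φ t * w t) / a₀ := by ring
      rw [s3, le_div_iff₀ ha₀]
      nlinarith
    have hKsplit : K₂ / a₀ * (φ t * w t) + ψ t ≤ K * (φ t * w t + ψ t) := by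
      have h1 : 0 ≤ φ t * w t := mul_nonneg (hφnn t ht) (hwpos t ht)
      have h2 : 0 ≤ K₂ / a₀ := div_nonneg hK₂ ha₀.le
      have h3 := hψpos t ht
      simp only [hK_def]; nlinarith
    calc φ t * w' t + L * w t + ψ' t = (φ t * w' t + ψ' t) + L * w t := by ring
      _ ≤ (ψ t + ‖g t‖ ^ 2) + K₂ / a₀ * (φ t * w t) := by
          rw [hcancel]; exact add_le_add h2ab hLw
      _ ≤ K * (φ t * w t + ψ t) + G := by linarith
  -- apply the Grönwall-type lemma
  have hE := aux_gronwall_energy hL hφlip hwderiv hψderiv hwpos hbound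
  intro t ht
  have hEt := hE t ht
  -- bound the Grönwall bound
  have hE0nn : 0 ≤ φ 0 * w 0 + ψ 0 :=
    add_nonneg (mul_nonneg (hφnn 0 ht0) (hwpos 0 ht0)) (hψpos 0 ht0)
  have hexp : Real.exp (K * t) ≤ Real.exp (K * T) :=
    Real.exp_le_exp.2 (mul_le_mul_of_nonneg_left ht.2 hKpos.le)
  have hexp1 : 1 ≤ Real.exp (K * t) :=
    Real.one_le_exp (mul_nonneg hKpos.le ht.1)
  have hgb : gronwallBound (φ 0 * w 0 + ψ 0) K G t ≤
      Real.exp (K * T) * ((φ 0 * w 0 + ψ 0) + G) := by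
    rw [gronwallBound_of_K_ne_0 hKpos.ne']
    have s1 : (φ 0 * w 0 + ψ 0) * Real.exp (K * t) ≤ (φ 0 * w 0 + ψ 0) * Real.exp (K * T) :=
      mul_le_mul_of_nonneg_left hexp hE0nn
    have s2 : G / K * (Real.exp (K * t) - 1) ≤ G * Real.exp (K * T) := by
      have h1 : G / K ≤ G := div_le_self hG0 hK1
      have h2 : Real.exp (K * t) - 1 ≤ Real.exp (K * T) := by
        have := (Real.exp_pos (K * T)).le; linarith
      have h3 : 0 ≤ Real.exp (K * t) - 1 := by linarith
      have h4 : 0 ≤ G / K := div_nonneg hG0 hKpos.le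
      exact mul_le_mul h1 h2 h3 hG0
    linarith
  -- bound the initial energy
  have hφ0 : φ 0 ≤ (Abd * (Qbd / ν₀ ^ 2 + 1)) * ν ^ 2 := by
    have h1 : a 0 ≤ Abd := haB 0 ht0
    have h2 : q 0 ≤ Qbd := hqB 0 ht0
    have h3 : 0 ≤ a 0 := le_trans ha₀.le (haa 0 ht0)
    have h4 : 0 ≤ q 0 + ν ^ 2 := add_nonneg (hqq 0 ht0) (sq_nonneg ν)
    have hd : Qbd / ν₀ ^ 2 * ν₀ ^ 2 = Qbd := div_mul_cancel₀ _ hν₀2.ne'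
    have h5 : Qbd + ν ^ 2 ≤ (Qbd / ν₀ ^ 2 + 1) * ν ^ 2 := by
      nlinarith [mul_nonneg (div_nonneg hQbd hν₀2.le) (sub_nonneg.2 hνν)]
    simp only [hφ_def]
    calc a 0 * (q 0 + ν ^ 2) ≤ Abd * (Qbd + ν ^ 2) := by nlinarith
      _ ≤ Abd * ((Qbd / ν₀ ^ 2 + 1) * ν ^ 2) := mul_le_mul_of_nonneg_left h5 hAbd
      _ = (Abd * (Qbd / ν₀ ^ 2 + 1)) * ν ^ 2 := by ring
  have hD : 0 ≤ ν ^ 2 * w 0 + ψ 0 :=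
    add_nonneg (mul_nonneg hν2.le (hwpos 0 ht0)) (hψpos 0 ht0)
  have hE0 : φ 0 * w 0 + ψ 0 ≤ K0 * (ν ^ 2 * w 0 + ψ 0) := by
    have h1 : φ 0 * w 0 ≤ (Abd * (Qbd / ν₀ ^ 2 + 1)) * ν ^ 2 * w 0 :=
      mul_le_mul_of_nonneg_right hφ0 (hwpos 0 ht0)
    have h2 : 0 ≤ Abd * (Qbd / ν₀ ^ 2 + 1) :=
      mul_nonneg hAbd (add_nonneg (div_nonneg hQbd hν₀2.le) zero_le_one)
    have h3 : 0 ≤ ν ^ 2 * w 0 := mul_nonneg hν2.le (hwpos 0 ht0)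
    have h4 := hψpos 0 ht0
    simp only [hK0_def]; nlinarith
  -- final chain
  have hLHS : ν ^ 2 * w t + ψ t ≤ (1 / a₀ + 1) * (φ t * w t + ψ t) := by
    have h1 : a₀ * (ν ^ 2 * w t) ≤ φ t * w t := by
      have := mul_le_mul_of_nonneg_right (hφpos t ht) (hwpos t ht)
      nlinarith
    have h2 : ν ^ 2 * w t ≤ 1 / a₀ * (φ t * w t) := by
      rw [one_div, inv_mul_eq_div, le_div_iff₀ ha₀]
      nlinarith
    have h3 : 0 ≤ φ t * w t := mul_nonneg (hφnn t ht) (hwpos t ht)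
    have h4 := hψpos t ht
    have h5 : 0 ≤ 1 / a₀ := by positivity
    nlinarith
  have hchain1 : φ t * w t + ψ t ≤ Real.exp (K * T) * (K0 * (ν ^ 2 * w 0 + ψ 0) + G) := by
    refine hEt.trans (hgb.trans ?_)
    exact mul_le_mul_of_nonneg_left (by linarith) (Real.exp_pos _).le
  have hchain2 : K0 * (ν ^ 2 * w 0 + ψ 0) + G ≤ (K0 + 1) * ((ν ^ 2 * w 0 + ψ 0) + G) := by
    nlinarith
  calc ν ^ 2 * ‖v t‖ ^ 2 + ‖v' t‖ ^ 2 = ν ^ 2 * w t + ψ t := rfl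
    _ ≤ (1 / a₀ + 1) * (φ t * w t + ψ t) := hLHS
    _ ≤ (1 / a₀ + 1) * (Real.exp (K * T) * (K0 * (ν ^ 2 * w 0 + ψ 0) + G)) :=
        mul_le_mul_of_nonneg_left hchain1 hP1.le
    _ ≤ (1 / a₀ + 1) * (Real.exp (K * T) * ((K0 + 1) * ((ν ^ 2 * w 0 + ψ 0) + G))) :=
        mul_le_mul_of_nonneg_left
          (mul_le_mul_of_nonneg_left hchain2 (Real.exp_pos _).le) hP1.le
    _ = (1 / a₀ + 1) * Real.exp (K * T) * (K0 + 1) * ((ν ^ 2 * w 0 + ψ 0) + G) := by ring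
    _ = (1 / a₀ + 1) * Real.exp (K * T) * (K0 + 1) *
        (ν ^ 2 * ‖v 0‖ ^ 2 + ‖v' 0‖ ^ 2 + G) := rfl
end

section
/- Uniqueness of very weak solutions at the Fourier level: let V_ε : [0,T] → ℂ² satisfy V_ε'(t) = iν A_ε(t)V_ε(t) + F_ε(t) with V_ε(0) = 0, where A_ε, S_ε are as in the symmetrised hyperbolic system with S_ε A_ε = A_ε* S_ε, c₁|V|² ≤ (S_ε V, V) ≤ c₂|V|² uniformly, ‖∂_t S_ε(t)‖ ≤ c ε^{-N}, and for every ℓ ∈ ℕ there is c_ℓ with sup_t |F_ε(t)| ≤ c_ℓ ε^{ℓ} (F_ε is negligible). Then for every ℓ ∈ ℕ there exists C_ℓ such that sup_{t∈[0,T]} |V_ε(t)| ≤ C_ℓ ε^{ℓ} for all ε ∈ (0,1]. -/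
open Set

/-- Uniqueness of very weak solutions at the Fourier level: for the symmetrised
hyperbolic system `V_ε' = iν A_ε(t) V_ε + F_ε` (components `V₁' = iν V₂ + F₁`,
`V₂' = iν b_ε V₁ + F₂`, symmetriser `S_ε = diag(b_ε, 1)` with `S_ε A_ε = A_ε* S_ε`),
zero initial data, uniform two-sided bounds `c₁ ≤ b_ε ≤ c₂` (so that
`c₁|V|² ≤ (S_ε V, V) ≤ c₂|V|²`), derivative bound `‖∂_t S_ε‖ = |b_ε'| ≤ c ε^{-N}`, and
negligible forcing `F_ε`, the solution `V_ε` is negligible: for every `ℓ` there is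
`C_ℓ` with `sup_{[0,T]} |V_ε(t)| ≤ C_ℓ ε^ℓ` for all `ε ∈ (0,1]`. -/
theorem very_weak_uniqueness_fourier
    (T c c₁ c₂ ν : ℝ) (N : ℕ) (hT : 0 < T) (hc : 0 < c) (hν : 0 < ν)
    (hc₁ : 0 < c₁) (hc₁1 : c₁ ≤ 1) (h1c₂ : 1 ≤ c₂)
    (b b' : ℝ → ℝ → ℝ)
    (hb : ∀ ε ∈ Ioc (0:ℝ) 1, ∀ t ∈ Icc (0:ℝ) T, HasDerivAt (b ε) (b' ε t) t)
    (hbb : ∀ ε ∈ Ioc (0:ℝ) 1, ∀ t ∈ Icc (0:ℝ) T, c₁ ≤ b ε t ∧ b ε t ≤ c₂)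
    (hb' : ∀ ε ∈ Ioc (0:ℝ) 1, ∀ t ∈ Icc (0:ℝ) T, |b' ε t| ≤ c * ε ^ (-(N : ℝ)))
    (V₁ V₂ F₁ F₂ : ℝ → ℝ → ℂ)
    (hV₁ : ∀ ε ∈ Ioc (0:ℝ) 1, ∀ t ∈ Icc (0:ℝ) T,
      HasDerivAt (V₁ ε) (Complex.I * (ν : ℂ) * V₂ ε t + F₁ ε t) t)
    (hV₂ : ∀ ε ∈ Ioc (0:ℝ) 1, ∀ t ∈ Icc (0:ℝ) T,
      HasDerivAt (V₂ ε) (Complex.I * (ν : ℂ) * ((b ε t : ℝ) : ℂ) * V₁ ε t + F₂ ε t) t)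
    (hV0 : ∀ ε ∈ Ioc (0:ℝ) 1, V₁ ε 0 = 0 ∧ V₂ ε 0 = 0)
    (hF : ∀ ℓ : ℕ, ∃ cℓ > 0, ∀ ε ∈ Ioc (0:ℝ) 1, ∀ t ∈ Icc (0:ℝ) T,
      ‖F₁ ε t‖ + ‖F₂ ε t‖ ≤ cℓ * ε ^ ℓ) :
    ∀ ℓ : ℕ, ∃ Cℓ > 0, ∀ ε ∈ Ioc (0:ℝ) 1, ∀ t ∈ Icc (0:ℝ) T,
      ‖V₁ ε t‖ + ‖V₂ ε t‖ ≤ Cℓ * ε ^ ℓ := by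
  intro ℓ
  obtain ⟨cℓ, hcℓ, hFb⟩ := hF ℓ
  set K : ℝ := ν * c₂ with hK
  have hKpos : 0 < K := mul_pos hν (lt_of_lt_of_le one_pos h1c₂)
  refine ⟨2 * cℓ * Real.exp (K * T) / K, div_pos (mul_pos (mul_pos two_pos hcℓ) (Real.exp_pos _)) hKpos, ?_⟩
  intro ε hε t ht
  set δ : ℝ := cℓ * ε ^ ℓ with hδ
  have hδ0 : 0 ≤ δ := le_of_lt (mul_pos hcℓ (pow_pos hε.1 ℓ))
  -- the pair function
  set f : ℝ → ℂ × ℂ := fun t => (V₁ ε t, V₂ ε t) with hf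
  set f' : ℝ → ℂ × ℂ := fun t =>
    (Complex.I * (ν : ℂ) * V₂ ε t + F₁ ε t,
      Complex.I * (ν : ℂ) * ((b ε t : ℝ) : ℂ) * V₁ ε t + F₂ ε t) with hf'
  have hderiv : ∀ s ∈ Icc (0:ℝ) T, HasDerivAt f (f' s) s := fun s hs =>
    HasDerivAt.prodMk (hV₁ ε hε s hs) (hV₂ ε hε s hs)
  have hcont : ContinuousOn f (Icc (0:ℝ) T) := fun s hs =>
    (hderiv s hs).continuousAt.continuousWithinAt
  have hbound : ∀ s ∈ Ico (0:ℝ) T, ‖f' s‖ ≤ K * ‖f s‖ + δ := by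
    intro s hs
    have hs' : s ∈ Icc (0:ℝ) T := ⟨hs.1, le_of_lt hs.2⟩
    obtain ⟨hb1, hb2⟩ := hbb ε hε s hs'
    have hFs := hFb ε hε s hs'
    have hF₁ : ‖F₁ ε s‖ ≤ δ :=
      le_trans (le_add_of_nonneg_right (norm_nonneg _)) hFs
    have hF₂ : ‖F₂ ε s‖ ≤ δ :=
      le_trans (le_add_of_nonneg_left (norm_nonneg _)) hFs
    have h1 : ‖V₁ ε s‖ ≤ ‖f s‖ := le_max_left _ _
    have h2 : ‖V₂ ε s‖ ≤ ‖f s‖ := le_max_right _ _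
    have hn1 : ‖Complex.I * (ν : ℂ) * V₂ ε s + F₁ ε s‖ ≤ K * ‖f s‖ + δ := by
      calc ‖Complex.I * (ν : ℂ) * V₂ ε s + F₁ ε s‖
          ≤ ‖Complex.I * (ν : ℂ) * V₂ ε s‖ + ‖F₁ ε s‖ := norm_add_le _ _
        _ ≤ K * ‖f s‖ + δ := by
            have : ‖Complex.I * (ν : ℂ) * V₂ ε s‖ = ν * ‖V₂ ε s‖ := by
              simp [abs_of_pos hν]
            rw [this]
            have : ν * ‖V₂ ε s‖ ≤ K * ‖f s‖ := by
              rw [hK]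
              have h5 := mul_le_mul_of_nonneg_left h2 (le_of_lt hν)
              have h6 : ν * ‖f s‖ ≤ ν * c₂ * ‖f s‖ := by
                nlinarith [mul_nonneg (mul_nonneg hν.le (sub_nonneg.mpr h1c₂))
                  (norm_nonneg (f s))]
              linarith
            linarith
    have hn2 : ‖Complex.I * (ν : ℂ) * ((b ε s : ℝ) : ℂ) * V₁ ε s + F₂ ε s‖
        ≤ K * ‖f s‖ + δ := by
      calc ‖Complex.I * (ν : ℂ) * ((b ε s : ℝ) : ℂ) * V₁ ε s + F₂ ε s‖
          ≤ ‖Complex.I * (ν : ℂ) * ((b ε s : ℝ) : ℂ) * V₁ ε s‖ + ‖F₂ ε s‖ :=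
            norm_add_le _ _
        _ ≤ K * ‖f s‖ + δ := by
            have hbe : |b ε s| = b ε s := abs_of_pos (lt_of_lt_of_le hc₁ hb1)
            have heq : ‖Complex.I * (ν : ℂ) * ((b ε s : ℝ) : ℂ) * V₁ ε s‖
                = ν * (b ε s * ‖V₁ ε s‖) := by
              simp [abs_of_pos hν, hbe, mul_assoc]
            rw [heq]
            have : ν * (b ε s * ‖V₁ ε s‖) ≤ K * ‖f s‖ := by
              rw [hK]
              have h0 : b ε s * ‖V₁ ε s‖ ≤ c₂ * ‖f s‖ :=
                mul_le_mul hb2 h1 (norm_nonneg _) (by linarith)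
              have := mul_le_mul_of_nonneg_left h0 (le_of_lt hν)
              linarith [this]
            linarith
    exact max_le hn1 hn2
  have hfa : ‖f 0‖ ≤ 0 := by
    obtain ⟨h01, h02⟩ := hV0 ε hε
    simp [hf, h01, h02, Prod.norm_def]
  have hmain := norm_le_gronwallBound_of_norm_deriv_right_le hcont
    (fun s hs => (hderiv s ⟨hs.1, le_of_lt hs.2⟩).hasDerivWithinAt) hfa hbound t ht
  rw [gronwallBound_of_K_ne_0 (ne_of_gt hKpos)] at hmain
  simp only [zero_mul, zero_add, sub_zero] at hmain
  have hexp : Real.exp (K * t) - 1 ≤ Real.exp (K * T) := by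
    have : Real.exp (K * t) ≤ Real.exp (K * T) :=
      Real.exp_le_exp.mpr (mul_le_mul_of_nonneg_left ht.2 (le_of_lt hKpos))
    linarith
  have hft : ‖f t‖ ≤ δ / K * Real.exp (K * T) := by
    refine le_trans hmain ?_
    exact mul_le_mul_of_nonneg_left hexp (div_nonneg hδ0 hKpos.le)
  have h1 : ‖V₁ ε t‖ ≤ ‖f t‖ := le_max_left _ _
  have h2 : ‖V₂ ε t‖ ≤ ‖f t‖ := le_max_right _ _
  have : ‖V₁ ε t‖ + ‖V₂ ε t‖ ≤ 2 * (δ / K * Real.exp (K * T)) := by linarith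
  refine le_trans this (le_of_eq ?_)
  rw [hδ]
  field_simp
end
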